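/- Let $k=\mathbb{F}_{2^m}$ with $m$ even, $e\in(k^*)^3$, $e=\lambda^3$. If all three cube roots $\lambda,\lambda\epsilon,\lambda\epsilon^2$ of $e$ lie in $\mathrm{AS}(k)$ then $x^4+x^3+x^2+x+e$ splits into four linear factors over $k$; otherwise (exactly one cube root lies in $\mathrm{AS}(k)$) it factors as a product of two irreducible quadratics. -/

import Mathlib

open Polynomial

/-- In char 2, if `x` and `y` are both not of the form `t + t^2`, then `x + y` is. -/
lemma aux_sum_mem {k : Type*} [Field k] [Fintype k] (h2 : (2:k) = 0) (x y : k)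
    (hx : ¬∃ t : k, x = t + t ^ 2) (hy : ¬∃ t : k, y = t + t ^ 2) :
    ∃ t : k, x + y = t + t ^ 2 := by
  classical
  set S : Finset k := Finset.image (fun t : k => t + t ^ 2) Finset.univ with hS
  have hmemS : ∀ a : k, a ∈ S ↔ ∃ t : k, a = t + t ^ 2 := by
    intro a
    simp only [hS, Finset.mem_image, Finset.mem_univ, true_and]
    constructor
    · rintro ⟨t, ht⟩; exact ⟨t, ht.symm⟩
    · rintro ⟨t, ht⟩; exact ⟨t, ht.symm⟩
  have hfiber : ∀ b ∈ S, (Finset.univ.filter (fun t : k => t + t ^ 2 = b)).card = 2 := by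
    intro b hb
    obtain ⟨t0, ht0⟩ := (hmemS b).1 hb
    have hset : Finset.univ.filter (fun t : k => t + t ^ 2 = b) = {t0, t0 + 1} := by
      ext u
      simp only [Finset.mem_filter, Finset.mem_univ, true_and, Finset.mem_insert,
        Finset.mem_singleton]
      constructor
      · intro h
        have hfac : (u - t0) * (u - (t0 + 1)) = 0 := by
          linear_combination h + ht0 + (-u*t0 - u + t0^2 + t0) * h2
        rcases mul_eq_zero.1 hfac with h' | h'
        · exact Or.inl (sub_eq_zero.1 h')
        · exact Or.inr (sub_eq_zero.1 h')
      · rintro (rfl | rfl)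
        · exact ht0.symm
        · linear_combination -ht0 + (t0 + 1) * h2
    rw [hset, Finset.card_insert_of_notMem, Finset.card_singleton]
    simp only [Finset.mem_singleton]
    intro h
    exact one_ne_zero (by linear_combination -h : (1:k) = 0)
  have hcardk : Fintype.card k = 2 * S.card := by
    rw [← Finset.card_univ, Finset.card_eq_sum_card_image (fun t : k => t + t ^ 2) Finset.univ]
    rw [Finset.sum_congr rfl hfiber, Finset.sum_const, smul_eq_mul, mul_comm]
  have hadd : ∀ a b : k, a ∈ S → b ∈ S → a + b ∈ S := by
    intro a b ha hb
    obtain ⟨s, hs⟩ := (hmemS a).1 ha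
    obtain ⟨u, hu⟩ := (hmemS b).1 hb
    exact (hmemS _).2 ⟨s + u, by linear_combination hs + hu + (-(s*u)) * h2⟩
  set T : Finset k := Finset.image (fun a : k => x + a) S with hT
  have hTcard : T.card = S.card := Finset.card_image_of_injective _ (add_right_injective x)
  have hdisj : Disjoint S T := by
    rw [Finset.disjoint_right]
    intro a haT haS
    apply hx
    obtain ⟨s, hsS, hsa⟩ := Finset.mem_image.1 haT
    have hxas : x = a + s := by linear_combination -hsa + (x - a) * h2
    rw [hxas]
    exact (hmemS _).1 (hadd a s haS hsS)
  have hunion : S ∪ T = Finset.univ := by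
    rw [← Finset.card_eq_iff_eq_univ]
    rw [Finset.card_union_of_disjoint hdisj, hTcard, hcardk]
    ring
  have hyT : y ∈ T := by
    have hy' : y ∈ S ∪ T := hunion ▸ Finset.mem_univ y
    rcases Finset.mem_union.1 hy' with h | h
    · exact absurd ((hmemS y).1 h) hy
    · exact h
  obtain ⟨s, hsS, hsy⟩ := Finset.mem_image.1 hyT
  obtain ⟨t, ht⟩ := (hmemS s).1 hsS
  exact ⟨t, by linear_combination -hsy + ht + x * h2⟩

/-- A monic quadratic with no root (expressed via Artin-Schreier form) is irreducible. -/
lemma quad_noroot_irr {k : Type*} [Field k] (h2 : (2:k) = 0) (b c : k) (hb : b ≠ 0)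
    (h : ∀ z : k, z ^ 2 + z ≠ c / b ^ 2) :
    Irreducible (X ^ 2 + C b * X + C c : k[X]) := by
  have hmon : (X ^ 2 + C b * X + C c : k[X]).Monic := by
    rw [add_assoc]
    exact monic_X_pow_add (lt_of_le_of_lt degree_linear_le (by norm_num))
  have hdeg : (X ^ 2 + C b * X + C c : k[X]).degree = 2 := by
    have h1 : (X ^ 2 + C b * X + C c : k[X]) = C 1 * X ^ 2 + C b * X + C c := by
      rw [map_one, one_mul]
    rw [h1]
    exact degree_quadratic one_ne_zero
  have hnd : (X ^ 2 + C b * X + C c : k[X]).natDegree = 2 := natDegree_eq_of_degree_eq_some hdeg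
  rw [hmon.irreducible_iff_roots_eq_zero_of_degree_le_three (by rw [hnd]) (by rw [hnd]; norm_num)]
  rw [Multiset.eq_zero_iff_forall_notMem]
  intro a ha
  rw [mem_roots', IsRoot.def] at ha
  have heval : a ^ 2 + b * a + c = 0 := by
    have h' := ha.2
    simpa using h'
  apply h (a / b)
  have hb2 : b ^ 2 ≠ 0 := pow_ne_zero 2 hb
  field_simp
  linear_combination heval + (-c) * h2

/-- The quadratic `X^2 + (t+1)X + t^3` is irreducible when `lam = t + t^2`, `lam ≠ 0`
and `lam * ε` is not of Artin-Schreier form. -/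
lemma quadIrr {k : Type*} [Field k] (h2 : (2:k) = 0) (ε lam t : k)
    (hε : ε ^ 2 + ε + 1 = 0) (hl0 : lam ≠ 0) (ht : lam = t + t ^ 2)
    (hno : ¬∃ s : k, lam * ε = s + s ^ 2) :
    Irreducible (X ^ 2 + C (t + 1) * X + C (t ^ 3) : k[X]) := by
  have htne : t + 1 ≠ 0 := by
    intro h
    apply hl0
    rw [ht]
    linear_combination t * h
  apply quad_noroot_irr h2 (t + 1) (t ^ 3) htne
  intro z hz
  apply hno
  have hz' : (z ^ 2 + z) * (t + 1) ^ 2 = t ^ 3 := by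
    rw [hz]
    exact div_mul_cancel₀ _ (pow_ne_zero 2 htne)
  refine ⟨(z * (t + 1) + t + ε ^ 2 * t * (t + 1)) / (t + 1), ?_⟩
  have key : (z * (t + 1) + t + ε ^ 2 * t * (t + 1)) * (t + 1)
      + (z * (t + 1) + t + ε ^ 2 * t * (t + 1)) ^ 2 = lam * ε * (t + 1) ^ 2 := by
    linear_combination hz' + ((-1)*ε + (-2)*ε*t + (-1)*ε*t^2) * ht
      + (1*t + 4*t^2 + 3*t^3 + 2*z*t + 4*z*t^2 + 2*z*t^3 + (-1)*ε*t^2 + (-2)*ε*t^3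
        + (-1)*ε*t^4 + 1*ε^2*t^2 + 2*ε^2*t^3 + 1*ε^2*t^4) * hε
      + ((-1)*t^2 + (-1)*t^3 + (-1)*z*t^2 + (-1)*z*t^3 + (-1)*ε*t + (-3)*ε*t^2
        + (-2)*ε*t^3 + (-1)*ε*z*t + (-2)*ε*z*t^2 + (-1)*ε*z*t^3) * h2
  have hdiv : (z * (t + 1) + t + ε ^ 2 * t * (t + 1)) / (t + 1)
      + ((z * (t + 1) + t + ε ^ 2 * t * (t + 1)) / (t + 1)) ^ 2
      = ((z * (t + 1) + t + ε ^ 2 * t * (t + 1)) * (t + 1)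
        + (z * (t + 1) + t + ε ^ 2 * t * (t + 1)) ^ 2) / (t + 1) ^ 2 := by
    field_simp
  rw [hdiv, key, mul_div_cancel_right₀ _ (pow_ne_zero 2 htne)]

/-- Case 2 main construction: factorization into two irreducible quadratics. -/
lemma case2main {k : Type*} [Field k] (h2 : (2:k) = 0) (ε e lam t : k)
    (hε : ε ^ 2 + ε + 1 = 0) (he : e ≠ 0) (hcube : lam ^ 3 = e) (ht : lam = t + t ^ 2)
    (hno : ¬∃ s : k, lam * ε = s + s ^ 2) :
    ∃ f g : k[X], f.Monic ∧ f.degree = 2 ∧ Irreducible f ∧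
      g.Monic ∧ g.degree = 2 ∧ Irreducible g ∧
      (X ^ 4 + X ^ 3 + X ^ 2 + X + C e : k[X]) = f * g := by
  have hl0 : lam ≠ 0 := by
    intro h
    apply he
    rw [← hcube, h]
    ring
  have ht' : lam = (t + 1) + (t + 1) ^ 2 := by
    linear_combination ht + ((-1) + (-1)*t) * h2
  refine ⟨X ^ 2 + C (t + 1) * X + C (t ^ 3),
    X ^ 2 + C ((t + 1) + 1) * X + C ((t + 1) ^ 3), ?_, ?_, ?_, ?_, ?_, ?_, ?_⟩
  · rw [add_assoc]
    exact monic_X_pow_add (lt_of_le_of_lt degree_linear_le (by norm_num))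
  · have h1 : (X ^ 2 + C (t + 1) * X + C (t ^ 3) : k[X])
        = C 1 * X ^ 2 + C (t + 1) * X + C (t ^ 3) := by rw [map_one, one_mul]
    rw [h1]
    exact degree_quadratic one_ne_zero
  · exact quadIrr h2 ε lam t hε hl0 ht hno
  · rw [add_assoc]
    exact monic_X_pow_add (lt_of_le_of_lt degree_linear_le (by norm_num))
  · have h1 : (X ^ 2 + C ((t + 1) + 1) * X + C ((t + 1) ^ 3) : k[X])
        = C 1 * X ^ 2 + C ((t + 1) + 1) * X + C ((t + 1) ^ 3) := by rw [map_one, one_mul]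
    rw [h1]
    exact degree_quadratic one_ne_zero
  · exact quadIrr h2 ε lam (t + 1) hε hl0 ht' hno
  · have expand2 : ∀ a b c d : k, (X ^ 2 + C a * X + C b) * (X ^ 2 + C c * X + C d)
        = X ^ 4 + C (a + c) * X ^ 3 + C (b + d + a * c) * X ^ 2
          + C (a * d + b * c) * X + C (b * d) := by
      intro a b c d
      simp only [map_add, map_mul]
      ring
    have hback : (t + 1) + 1 = t := by linear_combination h2
    rw [hback, expand2]
    have hP3 : (t + 1) + t = 1 := by linear_combination (1*t) * h2
    have hP2 : t ^ 3 + (t + 1) ^ 3 + (t + 1) * t = 1 := by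
      linear_combination (2*t + 2*t^2 + 1*t^3) * h2
    have hP1 : (t + 1) * (t + 1) ^ 3 + t ^ 3 * t = 1 := by
      linear_combination (2*t + 3*t^2 + 2*t^3 + 1*t^4) * h2
    have hP0 : t ^ 3 * (t + 1) ^ 3 = e := by
      linear_combination hcube + ((-1)*t^2 + (-2)*t^3 + (-1)*t^4 + (-1)*lam*t
        + (-1)*lam*t^2 + (-1)*lam^2) * ht
    rw [hP3, hP2, hP1, hP0]
    simp

theorem stmt_15 (k : Type*) [Field k] [Fintype k] [CharP k 2]
    (m : ℕ) (hm : Even m) (hq : Fintype.card k = 2 ^ m)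
    (ε : k) (hε : ε ^ 2 + ε + 1 = 0)
    (e lam : k) (he : e ≠ 0) (hlam : lam ^ 3 = e) :
    (((∃ t : k, lam = t + t ^ 2) ∧ (∃ t : k, lam * ε = t + t ^ 2) ∧
        (∃ t : k, lam * ε ^ 2 = t + t ^ 2)) →
      ∃ z : Fin 4 → k, (X ^ 4 + X ^ 3 + X ^ 2 + X + C e : k[X])
          = ∏ i, (X + C (z i))) ∧
    ((¬ ((∃ t : k, lam = t + t ^ 2) ∧ (∃ t : k, lam * ε = t + t ^ 2) ∧
        (∃ t : k, lam * ε ^ 2 = t + t ^ 2))) →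
      ∃ f g : k[X], f.Monic ∧ f.degree = 2 ∧ Irreducible f ∧
        g.Monic ∧ g.degree = 2 ∧ Irreducible g ∧
        (X ^ 4 + X ^ 3 + X ^ 2 + X + C e : k[X]) = f * g) := by
  have h2 : (2 : k) = 0 := by exact_mod_cast CharP.cast_eq_zero k 2
  constructor
  · -- Case 1: all three cube roots are of Artin-Schreier form
    rintro ⟨⟨t1, h1⟩, ⟨t2, hB⟩, ⟨t3, h3⟩⟩
    have hw2 : (ε * t1 + t3) ^ 2 + (ε * t1 + t3) = t1 := by
      linear_combination ((-1):k) * h3 + (1*ε^2) * h1 + (1*t1 + 2*t1^2) * hε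
        + ((-1)*t1 + 1*t1*t3*ε + (-1)*t1^2 + (-1)*t1^2*ε) * h2
    set w : k := ε * t1 + t3 with hwdef
    have hw4 : w ^ 4 + w = lam := by
      linear_combination (1 + (-1)*w + 1*w^2 + 1*t1) * hw2 + ((-1):k) * h1 + ((-1)*t1*w) * h2
    have hprod : w * (w + 1) * (w + ε) * (w + ε ^ 2) = lam := by
      linear_combination (1:k) * hw4 + ((-1)*w + 1*w^3 + 1*ε*w + 1*ε*w^2) * hε
    have hS1 : w ^ 3 + (w + 1) ^ 3 + (w + ε) ^ 3 + (w + ε ^ 2) ^ 3 = 1 := by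
      linear_combination ((-2) + 3*w + 3*w^2 + 2*ε + (-3)*ε*w + 3*ε^2*w + (-1)*ε^3
        + 1*ε^4) * hε + (1 + 2*w^3) * h2
    have hS2 : w ^ 3 * (w + 1) ^ 3 + w ^ 3 * (w + ε) ^ 3 + w ^ 3 * (w + ε ^ 2) ^ 3
        + (w + 1) ^ 3 * (w + ε) ^ 3 + (w + 1) ^ 3 * (w + ε ^ 2) ^ 3
        + (w + ε) ^ 3 * (w + ε ^ 2) ^ 3 = 1 := by
      linear_combination ((-3) + 21*w^3 + 9*w^4 + 9*w^5 + 3*ε + 3*ε*w^2 + (-12)*ε*w^3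
        + 3*ε^2*w + 9*ε^2*w^2 + 9*ε^2*w^3 + 9*ε^2*w^4 + (-2)*ε^3 + (-9)*ε^3*w^2
        + 6*ε^3*w^3 + 2*ε^4 + 9*ε^4*w^2 + 3*ε^4*w^3 + 3*ε^5*w^2 + (-1)*ε^6 + 3*ε^6*w
        + 1*ε^7) * hε + (1 + (-9)*w^3 + 3*w^6) * h2
    have hS3 : w ^ 3 * (w + 1) ^ 3 * (w + ε) ^ 3 + w ^ 3 * (w + 1) ^ 3 * (w + ε ^ 2) ^ 3
        + w ^ 3 * (w + ε) ^ 3 * (w + ε ^ 2) ^ 3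
        + (w + 1) ^ 3 * (w + ε) ^ 3 * (w + ε ^ 2) ^ 3 = 1 := by
      linear_combination ((-1) + (-6)*w^3 + 21*w^6 + 9*w^7 + 9*w^8 + 1*ε + 6*ε*w^3
        + 6*ε*w^5 + (-3)*ε*w^6 + 9*ε*w^7 + 6*ε^2*w^4 + 18*ε^2*w^5 + 18*ε^2*w^6
        + 9*ε^2*w^7 + (-1)*ε^3 + (-4)*ε^3*w^3 + 9*ε^3*w^4 + 9*ε^3*w^5 + 15*ε^3*w^6
        + 1*ε^4 + 13*ε^4*w^3 + 18*ε^4*w^4 + 18*ε^4*w^5 + 3*ε^4*w^6 + 3*ε^5*w^2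
        + 9*ε^5*w^3 + 9*ε^5*w^4 + 6*ε^5*w^5 + (-1)*ε^6 + 6*ε^6*w^2 + 7*ε^6*w^3
        + 6*ε^6*w^4 + 1*ε^7 + 3*ε^7*w + 3*ε^7*w^2 + 2*ε^7*w^3) * hε
        + (3*w^3 + (-9)*w^6 + 2*w^9) * h2
    have hS4 : w ^ 3 * (w + 1) ^ 3 * (w + ε) ^ 3 * (w + ε ^ 2) ^ 3 = e := by
      linear_combination (1:k) * hlam + (1*w^6 + 2*w^7 + 1*w^8 + 1*lam*w^3 + 1*lam*w^4
        + 1*lam^2 + 2*ε*w^5 + 4*ε*w^6 + 2*ε*w^7 + 1*ε*lam*w^2 + 1*ε*lam*w^3 + 1*ε^2*w^4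
        + 4*ε^2*w^5 + 5*ε^2*w^6 + 2*ε^2*w^7 + 1*ε^2*lam*w^2 + 1*ε^2*lam*w^3 + 4*ε^3*w^4
        + 8*ε^3*w^5 + 4*ε^3*w^6 + 1*ε^3*lam*w + 1*ε^3*lam*w^2 + 2*ε^4*w^3 + 5*ε^4*w^4
        + 4*ε^4*w^5 + 1*ε^4*w^6 + 2*ε^5*w^3 + 4*ε^5*w^4 + 2*ε^5*w^5 + 1*ε^6*w^2
        + 2*ε^6*w^3 + 1*ε^6*w^4) * hprod
    refine ⟨![w ^ 3, (w + 1) ^ 3, (w + ε) ^ 3, (w + ε ^ 2) ^ 3], ?_⟩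
    have expand4 : ∀ a b c d : k, (X + C a) * (X + C b) * (X + C c) * (X + C d)
        = X ^ 4 + C (a + b + c + d) * X ^ 3
          + C (a * b + a * c + a * d + b * c + b * d + c * d) * X ^ 2
          + C (a * b * c + a * b * d + a * c * d + b * c * d) * X + C (a * b * c * d) := by
      intro a b c d
      simp only [map_add, map_mul]
      ring
    rw [Fin.prod_univ_four]
    simp only [Matrix.cons_val_zero, Matrix.cons_val_one, Matrix.head_cons,
      Matrix.cons_val_two, Matrix.tail_cons, Matrix.cons_val_three, Matrix.head_fin_const]
    rw [expand4, hS1, hS2, hS3, hS4]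
    simp
  · -- Case 2: not all three cube roots are of Artin-Schreier form
    intro hno
    by_cases hA : ∃ t : k, lam = t + t ^ 2
    · obtain ⟨t1, h1⟩ := hA
      have hB : ¬∃ s : k, lam * ε = s + s ^ 2 := by
        rintro ⟨t3, hB⟩
        apply hno
        refine ⟨⟨t1, h1⟩, ⟨t3, hB⟩, ⟨t1 + t3, ?_⟩⟩
        linear_combination (1:k) * hB + ((-1)*ε + 1*ε^2) * h1 + (1*t1 + 1*t1^2) * hε
          + ((-1)*t1 + (-1)*t1*ε + (-1)*t1*t3 + (-1)*t1^2 + (-1)*t1^2*ε) * h2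
      exact case2main h2 ε e lam t1 hε he hlam h1 hB
    · by_cases hB : ∃ t : k, lam * ε = t + t ^ 2
      · obtain ⟨t3, hB'⟩ := hB
        have hcube1 : (lam * ε) ^ 3 = e := by
          linear_combination (1:k) * hlam + ((-1)*lam^3 + 1*ε*lam^3) * hε
        have hno1 : ¬∃ s : k, lam * ε * ε = s + s ^ 2 := by
          rintro ⟨t1, hs⟩
          apply hA
          refine ⟨t3 + t1, ?_⟩
          linear_combination (1:k) * hB' + (1:k) * hs + ((-1)*lam) * hε
            + (1*lam + (-1)*t1*t3) * h2
        exact case2main h2 ε e (lam * ε) t3 hε he hcube1 hB' hno1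
      · -- lam and lam*ε both not AS, so lam*ε^2 is
        have hC : ∃ t : k, lam * ε ^ 2 = t + t ^ 2 := by
          obtain ⟨t, ht⟩ := aux_sum_mem h2 lam (lam * ε) hA hB
          refine ⟨t, ?_⟩
          linear_combination (1:k) * ht + (1*lam) * hε + ((-1)*lam + (-1)*ε*lam) * h2
        obtain ⟨t3, hC'⟩ := hC
        have hcube2 : (lam * ε ^ 2) ^ 3 = e := by
          linear_combination (1:k) * hlam + ((-1)*lam^3 + 1*ε*lam^3 + (-1)*ε^3*lam^3
            + 1*ε^4*lam^3) * hε
        have hno2 : ¬∃ s : k, lam * ε ^ 2 * ε = s + s ^ 2 := by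
          rintro ⟨t, hs⟩
          apply hA
          refine ⟨t, ?_⟩
          linear_combination (1:k) * hs + (1*lam + (-1)*ε*lam) * hε
        exact case2main h2 ε e (lam * ε ^ 2) t3 hε he hcube2 hC' hno2
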